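/- Let 0 ≤ β_1 < 1 and reals g_{j,i} for j ∈ [T], i ∈ [d]. Then Σ_{t=1}^T Σ_{i=1}^d Σ_{j=1}^t β_1^{t-j} g_{j,i}^2 / sqrt(Σ_{k=1}^j g_{k,i}^2) ≤ (1/(1-β_1)) Σ_{i=1}^d Σ_{j=1}^T g_{j,i}^2/sqrt(Σ_{k=1}^j g_{k,i}^2) ≤ (2/(1-β_1)) Σ_{i=1}^d ||g_{1:T,i}||_2. -/

import Mathlib

open Finset

lemma key_div_sqrt (a b : ℝ) (hb : 0 ≤ b) (hab : b ≤ a) :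
    b / Real.sqrt a ≤ 2 * Real.sqrt a - 2 * Real.sqrt (a - b) := by
  rcases eq_or_lt_of_le (hb.trans hab) with h | ha
  · have hb0 : b = 0 := le_antisymm (hab.trans h.symm.le) hb
    simp [← h, hb0]
  · have hsa : 0 < Real.sqrt a := Real.sqrt_pos.mpr ha
    rw [div_le_iff₀ hsa]
    have h1 : Real.sqrt (a - b) * Real.sqrt a = Real.sqrt ((a - b) * a) :=
      (Real.sqrt_mul (by linarith) a).symm
    have h2 : 2 * Real.sqrt ((a - b) * a) ≤ (a - b) + a := by
      nlinarith [Real.sq_sqrt (by nlinarith : (0:ℝ) ≤ (a - b) * a),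
        Real.sqrt_nonneg ((a - b) * a), sq_nonneg (Real.sqrt (a-b) - Real.sqrt a),
        Real.sq_sqrt (by linarith : (0:ℝ) ≤ a - b), Real.sq_sqrt ha.le,
        Real.sqrt_nonneg (a - b), Real.sqrt_nonneg a, h1]
    have hsq : Real.sqrt a * Real.sqrt a = a := Real.mul_self_sqrt ha.le
    nlinarith [h1, h2]

lemma adagrad_bound (T : ℕ) (y : ℕ → ℝ) (hy : ∀ j, 0 ≤ y j) :
    ∑ j ∈ Icc 1 T, y j / Real.sqrt (∑ k ∈ Icc 1 j, y k) ≤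
      2 * Real.sqrt (∑ j ∈ Icc 1 T, y j) := by
  induction T with
  | zero => simp
  | succ n ih =>
    have hL : ∑ j ∈ Icc 1 (n+1), y j / Real.sqrt (∑ k ∈ Icc 1 j, y k) =
        (∑ j ∈ Icc 1 n, y j / Real.sqrt (∑ k ∈ Icc 1 j, y k)) +
          y (n+1) / Real.sqrt (∑ k ∈ Icc 1 (n+1), y k) := by
      rw [← Finset.Ico_add_one_right_eq_Icc, Finset.sum_Ico_succ_top (Nat.one_le_iff_ne_zero.mpr (Nat.succ_ne_zero n))]
      simp [Finset.Ico_add_one_right_eq_Icc]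
    rw [hL]
    have hS : ∑ k ∈ Icc 1 (n+1), y k = (∑ k ∈ Icc 1 n, y k) + y (n+1) := by
      rw [← Finset.Ico_add_one_right_eq_Icc, Finset.sum_Ico_succ_top (Nat.one_le_iff_ne_zero.mpr (Nat.succ_ne_zero n)), Nat.succ_eq_add_one, Finset.Ico_add_one_right_eq_Icc]
    have hSn : 0 ≤ ∑ k ∈ Icc 1 n, y k := Finset.sum_nonneg fun k _ => hy k
    have hkey : y (n+1) / Real.sqrt (∑ k ∈ Icc 1 (n+1), y k) ≤
        2 * Real.sqrt (∑ k ∈ Icc 1 (n+1), y k) - 2 * Real.sqrt (∑ k ∈ Icc 1 n, y k) := by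
      have := key_div_sqrt (∑ k ∈ Icc 1 (n+1), y k) (y (n+1)) (hy _) (by rw [hS]; linarith)
      have he : (∑ k ∈ Icc 1 (n+1), y k) - y (n+1) = ∑ k ∈ Icc 1 n, y k := by rw [hS]; ring
      rwa [he] at this
    have hlast : ∑ j ∈ Icc 1 n, y j / Real.sqrt (∑ k ∈ Icc 1 j, y k) ≤
        2 * Real.sqrt (∑ k ∈ Icc 1 n, y k) := ih
    linarith

theorem stmt_15 (β₁ : ℝ) (hβ₁ : 0 ≤ β₁) (hβ₁' : β₁ < 1) (T d : ℕ) (g : ℕ → ℕ → ℝ) :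
    (∑ t ∈ Finset.Icc 1 T, ∑ i ∈ Finset.range d, ∑ j ∈ Finset.Icc 1 t,
        β₁ ^ (t - j) * g j i ^ 2 / Real.sqrt (∑ k ∈ Finset.Icc 1 j, g k i ^ 2) ≤
      (1 / (1 - β₁)) * ∑ i ∈ Finset.range d, ∑ j ∈ Finset.Icc 1 T,
        g j i ^ 2 / Real.sqrt (∑ k ∈ Finset.Icc 1 j, g k i ^ 2)) ∧
    (1 / (1 - β₁)) * ∑ i ∈ Finset.range d, ∑ j ∈ Finset.Icc 1 T,
        g j i ^ 2 / Real.sqrt (∑ k ∈ Finset.Icc 1 j, g k i ^ 2) ≤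
      (2 / (1 - β₁)) * ∑ i ∈ Finset.range d,
        Real.sqrt (∑ j ∈ Finset.Icc 1 T, g j i ^ 2) := by
  have h1β : 0 < 1 - β₁ := by linarith
  have hc : ∀ j i, 0 ≤ g j i ^ 2 / Real.sqrt (∑ k ∈ Icc 1 j, g k i ^ 2) := fun j i =>
    div_nonneg (sq_nonneg _) (Real.sqrt_nonneg _)
  constructor
  · rw [Finset.sum_comm (s := Icc 1 T) (t := range d)]
    rw [Finset.mul_sum]
    refine Finset.sum_le_sum fun i _ => ?_
    -- swap t and j
    have hswap : ∑ t ∈ Icc 1 T, ∑ j ∈ Icc 1 t,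
        β₁ ^ (t - j) * g j i ^ 2 / Real.sqrt (∑ k ∈ Icc 1 j, g k i ^ 2) =
        ∑ j ∈ Icc 1 T, ∑ t ∈ Icc j T,
        β₁ ^ (t - j) * g j i ^ 2 / Real.sqrt (∑ k ∈ Icc 1 j, g k i ^ 2) := by
      apply Finset.sum_comm'
      intro t j
      simp only [mem_Icc]
      omega
    rw [hswap, Finset.mul_sum]
    refine Finset.sum_le_sum fun j hj => ?_
    have : ∑ t ∈ Icc j T, β₁ ^ (t - j) * g j i ^ 2 / Real.sqrt (∑ k ∈ Icc 1 j, g k i ^ 2) =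
        (∑ t ∈ Icc j T, β₁ ^ (t - j)) *
          (g j i ^ 2 / Real.sqrt (∑ k ∈ Icc 1 j, g k i ^ 2)) := by
      rw [Finset.sum_mul]
      exact Finset.sum_congr rfl fun t _ => by ring
    rw [this]
    have hgeom : ∑ t ∈ Icc j T, β₁ ^ (t - j) ≤ 1 / (1 - β₁) := by
      have : ∑ t ∈ Icc j T, β₁ ^ (t - j) = ∑ m ∈ range (T + 1 - j), β₁ ^ m := by
        rw [← Finset.Ico_add_one_right_eq_Icc]
        rw [Finset.sum_Ico_eq_sum_range]
        exact Finset.sum_congr rfl fun m _ => by rw [Nat.add_sub_cancel_left]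
      rw [this]
      have h := geom_sum_Ico_le_of_lt_one hβ₁ hβ₁' (m := 0) (n := T + 1 - j)
      rw [Finset.range_eq_Ico]
      simpa using h
    exact mul_le_mul_of_nonneg_right hgeom (hc j i)
  · rw [div_eq_mul_one_div 2 (1 - β₁), mul_comm 2 (1 / (1-β₁)), mul_assoc]
    apply mul_le_mul_of_nonneg_left _ (by positivity)
    rw [Finset.mul_sum]
    refine Finset.sum_le_sum fun i _ => ?_
    exact adagrad_bound T (fun j => g j i ^ 2) fun j => sq_nonneg _
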